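/- Let p be a prime with p ≡ 5 (mod 6) and p > 11. Suppose d, a, b, c, x, y, z, w are pairwise distinct vertices of G_p such that da, db, dc, ax, by, cz, wx, wy, wz are all edges of G_p (so these vertices and edges form a theta graph θ_{3,3} with endpoints d and w). Then, writing v = (v₁,v₂,v₃) for each vertex v, either w₁ = a₁ + b₁ + c₁, or a₁y₁ − a₁z₁ − b₁x₁ + b₁z₁ + c₁x₁ − c₁y₁ = 0 in 𝔽_p. -/

import Mathlib

open SimpleGraph

/-- The set `S ⊆ 𝔽_p` of residues of the integers `1, …, (p-5)/6`. -/
def Sset (p : ℕ) : Finset (ZMod p) :=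
  (Finset.Icc 1 ((p - 5) / 6)).image (fun k : ℕ => (k : ZMod p))

/-- The vertex set `V = S × 𝔽_p × 𝔽_p`. -/
abbrev Vert (p : ℕ) : Type := {v : ZMod p × ZMod p × ZMod p // v.1 ∈ Sset p}

/-- The graph `G_p`: distinct vertices `x = (x₁,x₂,x₃)` and `y = (y₁,y₂,y₃)` are adjacent
iff `x₂ + y₃ = x₁y₁²` and `x₃ + y₂ = x₁²y₁`. -/
def Gp (p : ℕ) : SimpleGraph (Vert p) where
  Adj x y := x ≠ y ∧
    x.val.2.1 + y.val.2.2 = x.val.1 * y.val.1 ^ 2 ∧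
    x.val.2.2 + y.val.2.1 = x.val.1 ^ 2 * y.val.1
  symm := by
    constructor
    rintro x y ⟨hne, h1, h2⟩
    exact ⟨hne.symm, by linear_combination h2, by linear_combination h1⟩
  loopless := ⟨fun x h => h.1 rfl⟩

instance (p : ℕ) : DecidableRel (Gp p).Adj := fun x y =>
  decidable_of_iff (x ≠ y ∧
    x.val.2.1 + y.val.2.2 = x.val.1 * y.val.1 ^ 2 ∧
    x.val.2.2 + y.val.2.1 = x.val.1 ^ 2 * y.val.1) Iff.rfl

lemma Sset_add_ne_zero {p : ℕ} [Fact p.Prime] (h11 : 11 < p) {u v : ZMod p}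
    (hu : u ∈ Sset p) (hv : v ∈ Sset p) : u + v ≠ 0 := by
  obtain ⟨k, hk, rfl⟩ := Finset.mem_image.mp hu
  obtain ⟨j, hj, rfl⟩ := Finset.mem_image.mp hv
  rw [Finset.mem_Icc] at hk hj
  have h : ((k + j : ℕ) : ZMod p) ≠ 0 := by
    rw [Ne, ZMod.natCast_eq_zero_iff]
    intro hdvd
    have := Nat.le_of_dvd (by omega) hdvd
    omega
  push_cast at h
  exact h

/-- If pairwise distinct vertices `d, a, b, c, x, y, z, w` form a theta graph `θ_{3,3}`
with edges `da, db, dc, ax, by, cz, wx, wy, wz`, then `w₁ = a₁ + b₁ + c₁` or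
`a₁y₁ − a₁z₁ − b₁x₁ + b₁z₁ + c₁x₁ − c₁y₁ = 0`. -/
theorem Gp_theta33 (p : ℕ) [Fact p.Prime] (h5 : p % 6 = 5) (h11 : 11 < p)
    (d a b c x y z w : Vert p)
    (hdist : [d, a, b, c, x, y, z, w].Pairwise (· ≠ ·))
    (eda : (Gp p).Adj d a) (edb : (Gp p).Adj d b) (edc : (Gp p).Adj d c)
    (eax : (Gp p).Adj a x) (eby : (Gp p).Adj b y) (ecz : (Gp p).Adj c z)
    (ewx : (Gp p).Adj w x) (ewy : (Gp p).Adj w y) (ewz : (Gp p).Adj w z) :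
    w.val.1 = a.val.1 + b.val.1 + c.val.1 ∨
    a.val.1 * y.val.1 - a.val.1 * z.val.1 - b.val.1 * x.val.1 + b.val.1 * z.val.1 +
      c.val.1 * x.val.1 - c.val.1 * y.val.1 = 0 := by
  simp only [List.pairwise_cons, List.mem_cons, List.not_mem_nil, or_false, ne_eq,
    List.Pairwise.nil, and_true, List.not_mem_nil, List.mem_singleton] at hdist
  obtain ⟨-, ha', hb', hc', hx', -, -, -⟩ := hdist
  have haw : a ≠ w := ha' w (by tauto)
  have hbw : b ≠ w := hb' w (by tauto)
  have hcw : c ≠ w := hc' w (by tauto)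
  have hxy : x ≠ y := hx' y (by tauto)
  obtain ⟨-, eda1, eda2⟩ := eda
  obtain ⟨-, edb1, edb2⟩ := edb
  obtain ⟨-, edc1, edc2⟩ := edc
  obtain ⟨-, eax1, eax2⟩ := eax
  obtain ⟨-, eby1, eby2⟩ := eby
  obtain ⟨-, ecz1, ecz2⟩ := ecz
  obtain ⟨-, ewx1, ewx2⟩ := ewx
  obtain ⟨-, ewy1, ewy2⟩ := ewy
  obtain ⟨-, ewz1, ewz2⟩ := ewz
  set D := d.val.1
  set A := a.val.1
  set B := b.val.1
  set C := c.val.1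
  set X := x.val.1
  set Y := y.val.1
  set Z := z.val.1
  set W := w.val.1
  set t : ZMod p := D ^ 2 * W - (d.val.2.2 + w.val.2.1) with ht_def
  set s : ZMod p := D * W ^ 2 - (d.val.2.1 + w.val.2.2) with hs_def
  have hA2 : (A - W) * (X ^ 2 - D ^ 2) = t := by linear_combination ewx1 + eda2 - eax1
  have hA1 : (A - W) * (A + W) * (X - D) = s := by linear_combination ewx2 + eda1 - eax2
  have hB2 : (B - W) * (Y ^ 2 - D ^ 2) = t := by linear_combination ewy1 + edb2 - eby1
  have hB1 : (B - W) * (B + W) * (Y - D) = s := by linear_combination ewy2 + edb1 - eby2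
  have hC2 : (C - W) * (Z ^ 2 - D ^ 2) = t := by linear_combination ewz1 + edc2 - ecz1
  have hC1 : (C - W) * (C + W) * (Z - D) = s := by linear_combination ewz2 + edc1 - ecz2
  have hAW : A - W ≠ 0 := by
    intro h
    apply haw
    apply Subtype.ext
    have e1 : A = W := by linear_combination h
    have e2 : a.val.2.1 = w.val.2.1 := by linear_combination eax1 - ewx1 + X ^ 2 * h
    have e3 : a.val.2.2 = w.val.2.2 := by linear_combination eax2 - ewx2 + (A + W) * X * h
    exact Prod.ext e1 (Prod.ext e2 e3)
  have hBW : B - W ≠ 0 := by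
    intro h
    apply hbw
    apply Subtype.ext
    have e1 : B = W := by linear_combination h
    have e2 : b.val.2.1 = w.val.2.1 := by linear_combination eby1 - ewy1 + Y ^ 2 * h
    have e3 : b.val.2.2 = w.val.2.2 := by linear_combination eby2 - ewy2 + (B + W) * Y * h
    exact Prod.ext e1 (Prod.ext e2 e3)
  by_cases h0 : t = 0
  · -- contradiction: X = Y forces x = y
    rw [h0] at hA2 hB2
    have hX2 : X ^ 2 - D ^ 2 = 0 := (mul_eq_zero.mp hA2).resolve_left hAW
    have hY2 : Y ^ 2 - D ^ 2 = 0 := (mul_eq_zero.mp hB2).resolve_left hBW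
    have hXD : X = D := by
      have h' : (X - D) * (X + D) = 0 := by linear_combination hX2
      rcases mul_eq_zero.mp h' with h | h
      · exact sub_eq_zero.mp h
      · exact absurd h (Sset_add_ne_zero h11 x.prop d.prop)
    have hYD : Y = D := by
      have h' : (Y - D) * (Y + D) = 0 := by linear_combination hY2
      rcases mul_eq_zero.mp h' with h | h
      · exact sub_eq_zero.mp h
      · exact absurd h (Sset_add_ne_zero h11 y.prop d.prop)
    have hXY : X = Y := hXD.trans hYD.symm
    have e2 : x.val.2.1 = y.val.2.1 := by linear_combination ewx2 - ewy2 + W ^ 2 * hXY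
    have e3 : x.val.2.2 = y.val.2.2 := by linear_combination ewx1 - ewy1 + W * (X + Y) * hXY
    exact absurd (Subtype.ext (Prod.ext hXY (Prod.ext e2 e3))) hxy
  · right
    have RA : (A + W) * t = s * (X + D) := by
      linear_combination (X + D) * hA1 - (A + W) * hA2
    have RB : (B + W) * t = s * (Y + D) := by
      linear_combination (Y + D) * hB1 - (B + W) * hB2
    have RC : (C + W) * t = s * (Z + D) := by
      linear_combination (Z + D) * hC1 - (C + W) * hC2
    have key : (A * Y - A * Z - B * X + B * Z + C * X - C * Y) * t = 0 := by
      linear_combination (Y - Z) * RA + (Z - X) * RB + (X - Y) * RC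
    exact (mul_eq_zero.mp key).resolve_right h0
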